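/- For all integers n ≥ 2, ∑_{k=1}^{n-1} a(k)·a(n-k) < a(n), where a(n) = 2(4n+1)!/((n+1)!(3n+2)!). -/

import Mathlib

set_option maxHeartbeats 2000000

open Filter Finset

noncomputable def a (n : ℕ) : ℝ :=
  2 * (Nat.factorial (4 * n + 1)) / ((Nat.factorial (n + 1)) * (Nat.factorial (3 * n + 2)))

lemma a_pos (n : ℕ) : 0 < a n := by
  unfold a
  have h1 := Nat.factorial_pos (4*n+1)
  have h2 := Nat.factorial_pos (n+1)
  have h3 := Nat.factorial_pos (3*n+2)
  positivity

lemma a_rec (m : ℕ) : a (m+1) * (((m:ℝ)+2)*(3*(m:ℝ)+5)*(3*(m:ℝ)+4)*(3*(m:ℝ)+3)) =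
    a m * ((4*(m:ℝ)+5)*(4*(m:ℝ)+4)*(4*(m:ℝ)+3)*(4*(m:ℝ)+2)) := by
  have h4 : 4*(m+1)+1 = (4*m+1)+1+1+1+1 := by ring
  have h3 : 3*(m+1)+2 = (3*m+2)+1+1+1 := by ring
  have hm : (m+1)+1 = (m+1)+1 := rfl
  unfold a
  rw [h4, h3]
  simp only [Nat.factorial_succ]
  have f1 : (0:ℝ) < Nat.factorial (4*m+1) := by exact_mod_cast Nat.factorial_pos _
  have f2 : (0:ℝ) < Nat.factorial (m+1) := by exact_mod_cast Nat.factorial_pos _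
  have f3 : (0:ℝ) < Nat.factorial (3*m+2) := by exact_mod_cast Nat.factorial_pos _
  push_cast
  field_simp
  ring

lemma logconvex (m : ℕ) : a (m+1) * a (m+1) ≤ a m * a (m+2) := by
  have r1 := a_rec m
  have r2 := a_rec (m+1)
  push_cast at r2
  rw [show m+1+1 = m+2 from rfl] at r2
  set x : ℝ := (m:ℝ) with hxdef
  have hx : (0:ℝ) ≤ x := Nat.cast_nonneg m
  have key : ((4*x+5)*(4*x+4)*(4*x+3)*(4*x+2)) * ((x+1+2)*(3*(x+1)+5)*(3*(x+1)+4)*(3*(x+1)+3))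
      ≤ ((x+2)*(3*x+5)*(3*x+4)*(3*x+3)) * ((4*(x+1)+5)*(4*(x+1)+4)*(4*(x+1)+3)*(4*(x+1)+2)) := by
    nlinarith [pow_nonneg hx 2, pow_nonneg hx 3, pow_nonneg hx 4, pow_nonneg hx 5, pow_nonneg hx 6, hx]
  have hD : (0:ℝ) < (x+2)*(3*x+5)*(3*x+4)*(3*x+3) := by positivity
  have hD2 : (0:ℝ) < (x+1+2)*(3*(x+1)+5)*(3*(x+1)+4)*(3*(x+1)+3) := by positivity
  have h1 := a_pos m
  have h2 := a_pos (m+1)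
  have h3 := a_pos (m+2)
  rw [← mul_le_mul_iff_of_pos_right (mul_pos hD hD2)]
  calc a (m+1) * a (m+1) * (((x+2)*(3*x+5)*(3*x+4)*(3*x+3)) * ((x+1+2)*(3*(x+1)+5)*(3*(x+1)+4)*(3*(x+1)+3)))
      = (a m * a (m+1)) * (((4*x+5)*(4*x+4)*(4*x+3)*(4*x+2)) * ((x+1+2)*(3*(x+1)+5)*(3*(x+1)+4)*(3*(x+1)+3))) := by
        linear_combination (a (m+1) * ((x+1+2)*(3*(x+1)+5)*(3*(x+1)+4)*(3*(x+1)+3))) * r1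
    _ ≤ (a m * a (m+1)) * (((x+2)*(3*x+5)*(3*x+4)*(3*x+3)) * ((4*(x+1)+5)*(4*(x+1)+4)*(4*(x+1)+3)*(4*(x+1)+2))) := by
        apply mul_le_mul_of_nonneg_left key (by positivity)
    _ = a m * a (m+2) * (((x+2)*(3*x+5)*(3*x+4)*(3*x+3)) * ((x+1+2)*(3*(x+1)+5)*(3*(x+1)+4)*(3*(x+1)+3))) := by
        linear_combination (-(a m * ((x+2)*(3*x+5)*(3*x+4)*(3*x+3)))) * r2

lemma cross_step (i j : ℕ) (h : i ≤ j) : a (i+1) * a j ≤ a i * a (j+1) := by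
  induction j, h using Nat.le_induction with
  | base => linarith [mul_comm (a i) (a (i+1))]
  | succ j hij ih =>
    have hlc := logconvex j
    have hj1 := a_pos (j+1)
    have h1 : a (i+1) * a (j+1) * a (j+1) ≤ a i * a (j+1+1) * a (j+1) := by
      calc a (i+1) * a (j+1) * a (j+1) = a (i+1) * (a (j+1) * a (j+1)) := by ring
        _ ≤ a (i+1) * (a j * a (j+2)) := by
            apply mul_le_mul_of_nonneg_left hlc (le_of_lt (a_pos (i+1)))
        _ = (a (i+1) * a j) * a (j+2) := by ring
        _ ≤ (a i * a (j+1)) * a (j+2) := by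
            apply mul_le_mul_of_nonneg_right ih (le_of_lt (a_pos (j+2)))
        _ = a i * a (j+1+1) * a (j+1) := by ring
    exact le_of_mul_le_mul_right h1 hj1

lemma cross_gen (i j d : ℕ) (h : i ≤ j) : a (i+d) * a j ≤ a i * a (j+d) := by
  induction d with
  | zero => simp
  | succ d ih =>
    have h1 := cross_step (i+d) (j+d) (by omega)
    have h2 : a (i+d+1) * a j * a (j+d) ≤ a i * a (j+d+1) * a (j+d) := by
      have t1 := mul_le_mul_of_nonneg_right h1 (le_of_lt (a_pos j))
      have t2 := mul_le_mul_of_nonneg_right ih (le_of_lt (a_pos (j+d+1)))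
      nlinarith [t1, t2]
    have h3 := le_of_mul_le_mul_right h2 (a_pos (j+d))
    have e1 : i+(d+1) = i+d+1 := by omega
    have e2 : j+(d+1) = j+d+1 := by omega
    rw [e1, e2]; exact h3

lemma cstep (k : ℕ) (hk : 5 ≤ k) :
    ((k:ℝ)+1)^2 * (a (k+1) * a (k+1)) * a (2*k) ≤ (k:ℝ)^2 * (a k * a k) * a (2*k+2) := by
  obtain ⟨j, rfl⟩ := Nat.exists_eq_add_of_le hk
  have r1 := a_rec (5+j)
  have r2 := a_rec (2*(5+j))
  have r3 := a_rec (2*(5+j)+1)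
  rw [show 2*(5+j)+1+1 = 2*(5+j)+2 from rfl] at r3
  push_cast at r1 r2 r3 ⊢
  set y : ℝ := (j:ℝ) with hy
  have hy0 : (0:ℝ) ≤ y := Nat.cast_nonneg j
  set x : ℝ := y + 5 with hx
  have hxr : ((5:ℝ) + y) = x := by rw [hx]; ring
  rw [hxr] at r1 r2 r3 ⊢
  have hx0 : (0:ℝ) ≤ x := by rw [hx]; linarith
  have key : (x+1)^2 * ((4*x+5)*(4*x+4)*(4*x+3)*(4*x+2))^2 * ((2*x+2)*(3*(2*x)+5)*(3*(2*x)+4)*(3*(2*x)+3)) * ((2*x+1+2)*(3*(2*x+1)+5)*(3*(2*x+1)+4)*(3*(2*x+1)+3)) ≤ x^2 * ((4*(2*x)+5)*(4*(2*x)+4)*(4*(2*x)+3)*(4*(2*x)+2)) * ((4*(2*x+1)+5)*(4*(2*x+1)+4)*(4*(2*x+1)+3)*(4*(2*x+1)+2)) * ((x+2)*(3*x+5)*(3*x+4)*(3*x+3))^2 := by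
    have hid : x^2 * ((4*(2*x)+5)*(4*(2*x)+4)*(4*(2*x)+3)*(4*(2*x)+2)) * ((4*(2*x+1)+5)*(4*(2*x+1)+4)*(4*(2*x+1)+3)*(4*(2*x+1)+2)) * ((x+2)*(3*x+5)*(3*x+4)*(3*x+3))^2 - ((x+1)^2 * ((4*x+5)*(4*x+4)*(4*x+3)*(4*x+2))^2 * ((2*x+2)*(3*(2*x)+5)*(3*(2*x)+4)*(3*(2*x)+3)) * ((2*x+1+2)*(3*(2*x+1)+5)*(3*(2*x+1)+4)*(3*(2*x+1)+3))) = 13220945545344768000000 + 50475792487205339136000*y^1 + 85064728293682146708480*y^2 + 86021128945554378905088*y^3 + 59194101019037098699008*y^4 + 29635639549852124598912*y^5 + 11231977913209864698624*y^6 + 3302499137278887838080*y^7 + 764444326648377669120*y^8 + 140344429429400024448*y^9 + 20462767743378269952*y^10 + 2358441436853414016*y^11 + 212412771393221376*y^12 + 14645645294635008*y^13 + 746949284204544*y^14 + 26565309628416*y^15 + 588469764096*y^16 + 6115295232*y^17 := by rw [hx]; ring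
    nlinarith [hid, pow_nonneg hy0 2, pow_nonneg hy0 3, pow_nonneg hy0 4, pow_nonneg hy0 5,
      pow_nonneg hy0 6, pow_nonneg hy0 7, pow_nonneg hy0 8, pow_nonneg hy0 9, pow_nonneg hy0 10,
      pow_nonneg hy0 11, pow_nonneg hy0 12, pow_nonneg hy0 13, pow_nonneg hy0 14,
      pow_nonneg hy0 15, pow_nonneg hy0 16, pow_nonneg hy0 17]
  have hM : (0:ℝ) < (((x+2)*(3*x+5)*(3*x+4)*(3*x+3))^2 * (((2*x+2)*(3*(2*x)+5)*(3*(2*x)+4)*(3*(2*x)+3)) * ((2*x+1+2)*(3*(2*x+1)+5)*(3*(2*x+1)+4)*(3*(2*x+1)+3)))) := by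
    have h1 : (0:ℝ) < x + 2 := by linarith
    have h2 : (0:ℝ) < 3*x+5 := by linarith
    have h3 : (0:ℝ) < 3*x+4 := by linarith
    have h4 : (0:ℝ) < 3*x+3 := by linarith
    have h5 : (0:ℝ) < 2*x+2 := by linarith
    have h6 : (0:ℝ) < 3*(2*x)+5 := by linarith
    have h7 : (0:ℝ) < 3*(2*x)+4 := by linarith
    have h8 : (0:ℝ) < 3*(2*x)+3 := by linarith
    have h9 : (0:ℝ) < 2*x+1+2 := by linarith
    have h10 : (0:ℝ) < 3*(2*x+1)+5 := by linarith
    have h11 : (0:ℝ) < 3*(2*x+1)+4 := by linarith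
    have h12 : (0:ℝ) < 3*(2*x+1)+3 := by linarith
    positivity
  have EL : ((x+1)^2 * (a (5+j+1) * a (5+j+1)) * a (2*(5+j))) * (((x+2)*(3*x+5)*(3*x+4)*(3*x+3))^2 * (((2*x+2)*(3*(2*x)+5)*(3*(2*x)+4)*(3*(2*x)+3)) * ((2*x+1+2)*(3*(2*x+1)+5)*(3*(2*x+1)+4)*(3*(2*x+1)+3))))
      = (a (5+j) * a (5+j) * a (2*(5+j))) * ((x+1)^2 * ((4*x+5)*(4*x+4)*(4*x+3)*(4*x+2))^2 * ((2*x+2)*(3*(2*x)+5)*(3*(2*x)+4)*(3*(2*x)+3)) * ((2*x+1+2)*(3*(2*x+1)+5)*(3*(2*x+1)+4)*(3*(2*x+1)+3))) := by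
    linear_combination ((x+1)^2 * a (2*(5+j)) * ((2*x+2)*(3*(2*x)+5)*(3*(2*x)+4)*(3*(2*x)+3)) * ((2*x+1+2)*(3*(2*x+1)+5)*(3*(2*x+1)+4)*(3*(2*x+1)+3)) * (a (5+j+1) * ((x+2)*(3*x+5)*(3*x+4)*(3*x+3)) + a (5+j) * ((4*x+5)*(4*x+4)*(4*x+3)*(4*x+2)))) * r1
  have ER : (x^2 * (a (5+j) * a (5+j)) * a (2*(5+j)+2)) * (((x+2)*(3*x+5)*(3*x+4)*(3*x+3))^2 * (((2*x+2)*(3*(2*x)+5)*(3*(2*x)+4)*(3*(2*x)+3)) * ((2*x+1+2)*(3*(2*x+1)+5)*(3*(2*x+1)+4)*(3*(2*x+1)+3))))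
      = (a (5+j) * a (5+j) * a (2*(5+j))) * (x^2 * ((4*(2*x)+5)*(4*(2*x)+4)*(4*(2*x)+3)*(4*(2*x)+2)) * ((4*(2*x+1)+5)*(4*(2*x+1)+4)*(4*(2*x+1)+3)*(4*(2*x+1)+2)) * ((x+2)*(3*x+5)*(3*x+4)*(3*x+3))^2) := by
    linear_combination (x^2 * (a (5+j) * a (5+j)) * ((x+2)*(3*x+5)*(3*x+4)*(3*x+3))^2 * ((2*x+2)*(3*(2*x)+5)*(3*(2*x)+4)*(3*(2*x)+3))) * r3
      + (x^2 * (a (5+j) * a (5+j)) * ((x+2)*(3*x+5)*(3*x+4)*(3*x+3))^2 * ((4*(2*x+1)+5)*(4*(2*x+1)+4)*(4*(2*x+1)+3)*(4*(2*x+1)+2))) * r2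
  have final : ((x+1)^2 * (a (5+j+1) * a (5+j+1)) * a (2*(5+j))) * (((x+2)*(3*x+5)*(3*x+4)*(3*x+3))^2 * (((2*x+2)*(3*(2*x)+5)*(3*(2*x)+4)*(3*(2*x)+3)) * ((2*x+1+2)*(3*(2*x+1)+5)*(3*(2*x+1)+4)*(3*(2*x+1)+3))))
      ≤ (x^2 * (a (5+j) * a (5+j)) * a (2*(5+j)+2)) * (((x+2)*(3*x+5)*(3*x+4)*(3*x+3))^2 * (((2*x+2)*(3*(2*x)+5)*(3*(2*x)+4)*(3*(2*x)+3)) * ((2*x+1+2)*(3*(2*x+1)+5)*(3*(2*x+1)+4)*(3*(2*x+1)+3)))) := by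
    rw [EL, ER]
    exact mul_le_mul_of_nonneg_left key
      (le_of_lt (mul_pos (mul_pos (a_pos _) (a_pos _)) (a_pos _)))
  exact le_of_mul_le_mul_right final hM

lemma c_le (k : ℕ) (hk : 5 ≤ k) :
    (k:ℝ)^2 * (a k * a k) * a 10 ≤ 25 * (a 5 * a 5) * a (2*k) := by
  induction k, hk using Nat.le_induction with
  | base => norm_num
  | succ k hk ih =>
    have hs := cstep k hk
    have t1 := mul_le_mul_of_nonneg_right hs (le_of_lt (a_pos 10))
    have t2 := mul_le_mul_of_nonneg_right ih (le_of_lt (a_pos (2*k+2)))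
    have e : 2*(k+1) = 2*k+2 := by ring
    rw [e]
    push_cast
    have h2 : ((k:ℝ)+1)^2 * (a (k+1) * a (k+1)) * a 10 * a (2*k)
        ≤ 25 * (a 5 * a 5) * a (2*k+2) * a (2*k) := by nlinarith [t1, t2]
    exact le_of_mul_le_mul_right h2 (a_pos (2*k))

-- f monotone in n:  f(k, k+v) ≤ f(k, k+u) for u ≤ v
lemma f_mono (k u v : ℕ) (huv : u ≤ v) : a k * a v / a (k+v) ≤ a k * a u / a (k+u) := by
  obtain ⟨d, rfl⟩ := Nat.exists_eq_add_of_le huv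
  rw [div_le_div_iff₀ (a_pos _) (a_pos _)]
  have h := cross_gen u (k+u) d (Nat.le_add_left u k)
  have h2 := mul_le_mul_of_nonneg_left h (le_of_lt (a_pos k))
  calc a k * a (u+d) * a (k+u) = a k * (a (u+d) * a (k+u)) := by ring
    _ ≤ a k * (a u * a (k+u+d)) := h2
    _ = a k * a u * a (k+(u+d)) := by rw [show k+(u+d) = k+u+d from by omega]; ring

lemma a1 : a 1 = 1 := by unfold a; norm_num [Nat.factorial]
lemma a2 : a 2 = 3 := by have h := a_rec 1; rw [a1] at h; norm_num at h; linarith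
lemma a3 : a 3 = 13 := by have h := a_rec 2; rw [a2] at h; norm_num at h; linarith
lemma a4 : a 4 = 68 := by have h := a_rec 3; rw [a3] at h; norm_num at h; linarith
lemma a5 : a 5 = 399 := by have h := a_rec 4; rw [a4] at h; norm_num at h; linarith
lemma a6 : a 6 = 2530 := by have h := a_rec 5; rw [a5] at h; norm_num at h; linarith
lemma a7 : a 7 = 16965 := by have h := a_rec 6; rw [a6] at h; norm_num at h; linarith
lemma a8 : a 8 = 118668 := by have h := a_rec 7; rw [a7] at h; norm_num at h; linarith
lemma a9 : a 9 = 857956 := by have h := a_rec 8; rw [a8] at h; norm_num at h; linarith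
lemma a10 : a 10 = 6369883 := by have h := a_rec 9; rw [a9] at h; norm_num at h; linarith
lemma a11 : a 11 = 48336171 := by have h := a_rec 10; rw [a10] at h; norm_num at h; linarith
lemma a12 : a 12 = 373537388 := by have h := a_rec 11; rw [a11] at h; norm_num at h; linarith


lemma sum_inv_sq (m : ℕ) (hm : 4 ≤ m) :
    ∑ k ∈ Finset.Ico 5 (m+1), (1/(k:ℝ)^2) ≤ 1/4 - 1/(m:ℝ) := by
  induction m, hm using Nat.le_induction with
  | base => norm_num
  | succ m hm ih =>
    rw [Finset.sum_Ico_succ_top (by omega)]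
    have hm0 : (0:ℝ) < (m:ℝ) := by exact_mod_cast (by omega : 0 < m)
    have hm1 : (0:ℝ) < (m:ℝ)+1 := by linarith
    have key : (1:ℝ)/((m:ℝ)+1)^2 ≤ 1/(m:ℝ) - 1/((m:ℝ)+1) := by
      rw [div_sub_div _ _ (ne_of_gt hm0) (ne_of_gt hm1)]
      rw [div_le_div_iff₀ (by positivity) (by positivity)]
      ring_nf
      nlinarith [hm0]
    push_cast
    linarith [ih]

lemma term_mid (k n : ℕ) (hk : 5 ≤ k) (hkn : k ≤ n - k) (hn : k ≤ n) :
    a k * a (n-k) ≤ 25 * (a 5 * a 5) / a 10 * (1/(k:ℝ)^2) * a n := by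
  have h1 := f_mono k k (n-k) hkn
  rw [show k+(n-k) = n from by omega, show k+k = 2*k from by omega] at h1
  have hc := c_le k hk
  have hk0 : (0:ℝ) < (k:ℝ) := by exact_mod_cast (by omega : 0 < k)
  have h10 := a_pos 10
  have h2 : a k * a k / a (2*k) ≤ 25 * (a 5 * a 5) / a 10 * (1/(k:ℝ)^2) := by
    have e : 25 * (a 5 * a 5) / a 10 * (1/(k:ℝ)^2) = 25 * (a 5 * a 5) / (a 10 * (k:ℝ)^2) := by
      field_simp
    rw [e, div_le_div_iff₀ (a_pos (2*k)) (by positivity)]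
    nlinarith [hc]
  calc a k * a (n-k) = (a k * a (n-k) / a n) * a n := (div_mul_cancel₀ _ (ne_of_gt (a_pos n))).symm
    _ ≤ (a k * a k / a (2*k)) * a n := mul_le_mul_of_nonneg_right h1 (le_of_lt (a_pos n))
    _ ≤ 25 * (a 5 * a 5) / a 10 * (1/(k:ℝ)^2) * a n := mul_le_mul_of_nonneg_right h2 (le_of_lt (a_pos n))

lemma term_front (k u n : ℕ) (hku : k + u = 12) (huv : u ≤ n - k) (hkn : k ≤ n) :
    a k * a (n-k) ≤ a k * a u / a 12 * a n := by
  have h1 := f_mono k u (n-k) huv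
  rw [show k+(n-k) = n from by omega, hku] at h1
  calc a k * a (n-k) = (a k * a (n-k) / a n) * a n := (div_mul_cancel₀ _ (ne_of_gt (a_pos n))).symm
    _ ≤ (a k * a u / a 12) * a n := mul_le_mul_of_nonneg_right h1 (le_of_lt (a_pos n))

lemma term4 (n : ℕ) (h4 : 4 ≤ n - 4) (hn : 4 ≤ n) :
    a 4 * a (n-4) ≤ a 4 * a 4 / a 8 * a n := by
  have h1 := f_mono 4 4 (n-4) h4
  rw [show 4+(n-4) = n from by omega, show 4+4 = 8 from rfl] at h1
  calc a 4 * a (n-4) = (a 4 * a (n-4) / a n) * a n := (div_mul_cancel₀ _ (ne_of_gt (a_pos n))).symm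
    _ ≤ (a 4 * a 4 / a 8) * a n := mul_le_mul_of_nonneg_right h1 (le_of_lt (a_pos n))

theorem big (n : ℕ) (hn : 12 ≤ n) :
    ∑ k ∈ Finset.Ico 1 n, a k * a (n - k) < a n := by
  set h := n / 2 with hh
  have h6 : 6 ≤ h := by omega
  have hh1 : h + 1 ≤ n := by omega
  have hnh : n - h ≤ h + 1 := by omega
  -- Step A : reflect
  have splitA : ∑ k ∈ Finset.Ico 1 n, a k * a (n - k)
      = ∑ k ∈ Finset.Ico 1 (h+1), a k * a (n - k) + ∑ k ∈ Finset.Ico (h+1) n, a k * a (n - k) :=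
    (Finset.sum_Ico_consecutive _ (by omega) (by omega)).symm
  have reflA : ∑ k ∈ Finset.Ico (h+1) n, a k * a (n - k)
      = ∑ k ∈ Finset.Ico 1 (n-h), a k * a (n - k) := by
    apply Finset.sum_nbij' (fun k => n - k) (fun k => n - k)
    · intro x hx
      simp only [Finset.mem_Ico] at hx ⊢
      omega
    · intro x hx
      simp only [Finset.mem_Ico] at hx ⊢
      omega
    · intro x hx
      simp only [Finset.mem_Ico] at hx
      omega
    · intro x hx
      simp only [Finset.mem_Ico] at hx
      omega
    · intro x hx
      simp only [Finset.mem_Ico] at hx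
      rw [show n - (n - x) = x from by omega]
      ring
  have subA : ∑ k ∈ Finset.Ico 1 (n-h), a k * a (n - k)
      ≤ ∑ k ∈ Finset.Ico 1 (h+1), a k * a (n - k) := by
    apply Finset.sum_le_sum_of_subset_of_nonneg
    · apply Finset.Ico_subset_Ico le_rfl hnh
    · intro i _ _
      exact le_of_lt (mul_pos (a_pos i) (a_pos (n-i)))
  have stepA : ∑ k ∈ Finset.Ico 1 n, a k * a (n - k)
      ≤ 2 * ∑ k ∈ Finset.Ico 1 (h+1), a k * a (n - k) := by
    rw [splitA, reflA]; linarith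
  -- Step B : split the half sum
  have splitB : ∑ k ∈ Finset.Ico 1 (h+1), a k * a (n - k)
      = (a 1 * a (n-1) + a 2 * a (n-2) + a 3 * a (n-3) + a 4 * a (n-4))
        + ∑ k ∈ Finset.Ico 5 (h+1), a k * a (n - k) := by
    rw [Finset.sum_eq_sum_Ico_succ_bot (by omega : 1 < h+1)]
    rw [Finset.sum_eq_sum_Ico_succ_bot (by omega : 2 < h+1)]
    rw [Finset.sum_eq_sum_Ico_succ_bot (by omega : 3 < h+1)]
    rw [Finset.sum_eq_sum_Ico_succ_bot (by omega : 4 < h+1)]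
    ring
  -- bounds
  have t1 : a 1 * a (n-1) ≤ a 1 * a 11 / a 12 * a n := term_front 1 11 n rfl (by omega) (by omega)
  have t2 : a 2 * a (n-2) ≤ a 2 * a 10 / a 12 * a n := term_front 2 10 n rfl (by omega) (by omega)
  have t3 : a 3 * a (n-3) ≤ a 3 * a 9 / a 12 * a n := term_front 3 9 n rfl (by omega) (by omega)
  have t4 : a 4 * a (n-4) ≤ a 4 * a 4 / a 8 * a n := term4 n (by omega) (by omega)
  have tmid : ∑ k ∈ Finset.Ico 5 (h+1), a k * a (n - k)
      ≤ 25 * (a 5 * a 5) / a 10 * a n * (1/4) := by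
    calc ∑ k ∈ Finset.Ico 5 (h+1), a k * a (n - k)
        ≤ ∑ k ∈ Finset.Ico 5 (h+1), 25 * (a 5 * a 5) / a 10 * (1/(k:ℝ)^2) * a n := by
          apply Finset.sum_le_sum
          intro k hk
          simp only [Finset.mem_Ico] at hk
          exact term_mid k n (by omega) (by omega) (by omega)
      _ = 25 * (a 5 * a 5) / a 10 * a n * ∑ k ∈ Finset.Ico 5 (h+1), (1/(k:ℝ)^2) := by
          rw [Finset.mul_sum]
          apply Finset.sum_congr rfl
          intro k _
          ring
      _ ≤ 25 * (a 5 * a 5) / a 10 * a n * (1/4) := by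
          apply mul_le_mul_of_nonneg_left
          · have hs := sum_inv_sq h (by omega)
            have hh0 : (0:ℝ) < (h:ℝ) := by exact_mod_cast (by omega : 0 < h)
            have : (0:ℝ) < 1/(h:ℝ) := by positivity
            linarith
          · have := a_pos 5
            have := a_pos 10
            have := a_pos n
            positivity
  -- final
  have han := a_pos n
  have final : 2 * ((a 1 * a 11 / a 12 * a n + a 2 * a 10 / a 12 * a n + a 3 * a 9 / a 12 * a n
      + a 4 * a 4 / a 8 * a n) + 25 * (a 5 * a 5) / a 10 * a n * (1/4)) < a n := by
    rw [a1, a2, a3, a4, a5, a8, a9, a10, a11, a12]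
    rw [show (2:ℝ) * ((1 * 48336171 / 373537388 * a n + 3 * 6369883 / 373537388 * a n
      + 13 * 857956 / 373537388 * a n + 68 * 68 / 118668 * a n)
      + 25 * (399 * 399) / 6369883 * a n * (1/4))
      = (2 * (1 * 48336171 / 373537388 + 3 * 6369883 / 373537388 + 13 * 857956 / 373537388
        + 68 * 68 / 118668 + 25 * (399 * 399) / 6369883 * (1/4))) * a n from by ring]
    nlinarith [han]
  calc ∑ k ∈ Finset.Ico 1 n, a k * a (n - k)
      ≤ 2 * ∑ k ∈ Finset.Ico 1 (h+1), a k * a (n - k) := stepA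
    _ ≤ 2 * ((a 1 * a 11 / a 12 * a n + a 2 * a 10 / a 12 * a n + a 3 * a 9 / a 12 * a n
        + a 4 * a 4 / a 8 * a n) + 25 * (a 5 * a 5) / a 10 * a n * (1/4)) := by
        rw [splitB]
        have := tmid
        linarith
    _ < a n := final


theorem stmt16 (n : ℕ) (hn : 2 ≤ n) :
    ∑ k ∈ Finset.Ico 1 n, a k * a (n - k) < a n := by
  rcases lt_or_ge n 12 with h | h
  · interval_cases n <;>
      norm_num [Finset.sum_Ico_eq_sum_range, Finset.sum_range_succ,
        a1, a2, a3, a4, a5, a6, a7, a8, a9, a10, a11]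
  · exact big n h
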